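/- Let K be a field, G = SL₂(K), and V a G-module. Define the ascending series Z₀ = 0 and Z_{j+1} = {v ∈ V : [u', v] ∈ Z_j for all u' ∈ U} for j ≥ 0. Then each Z_j is a B-invariant subgroup of V, and for every n ≥ 2 the smallest G-invariant subgroup of V containing Z₁ ∩ w·Z_{n−1} is contained in Z_{n−1}. Consequently, if V is G-irreducible (its only G-invariant subgroups are 0 and V) and Z_{n−1} ≠ V, then Z₁ ∩ w·Z_{n−1} = 0. -/

import Mathlib

/-- The unipotent element `u_λ = [[1, λ], [0, 1]]` of `SL₂(K)`. -/
def uu (K : Type*) [Field K] (l : K) : Matrix.SpecialLinearGroup (Fin 2) K :=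
  ⟨!![1, l; 0, 1], by simp [Matrix.det_fin_two_of]⟩

/-- The Weyl element `w = [[0, 1], [-1, 0]]` of `SL₂(K)`. -/
def ww (K : Type*) [Field K] : Matrix.SpecialLinearGroup (Fin 2) K :=
  ⟨!![0, 1; -1, 0], by simp [Matrix.det_fin_two_of]⟩

/-- The ascending series `Z₀ = 0`, `Z_{j+1} = {v | [u', v] ∈ Z_j for all u' ∈ U}`,
where `U = {u_λ : λ ∈ K}` and `[g, v] = g • v - v`. -/
def Zs (K : Type*) [Field K] (V : Type*) [AddCommGroup V]
    [DistribMulAction (Matrix.SpecialLinearGroup (Fin 2) K) V] :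
    ℕ → AddSubgroup V
  | 0 => ⊥
  | j + 1 =>
    { carrier := {v | ∀ l : K, uu K l • v - v ∈ Zs K V j}
      zero_mem' := by
        intro l
        simpa using (Zs K V j).zero_mem
      add_mem' := by
        intro a b ha hb l
        have h : uu K l • (a + b) - (a + b) = (uu K l • a - a) + (uu K l • b - b) := by
          rw [smul_add]; abel
        rw [h]; exact (Zs K V j).add_mem (ha l) (hb l)
      neg_mem' := by
        intro a ha l
        have h : uu K l • (-a) - (-a) = -(uu K l • a - a) := by
          rw [smul_neg]; abel
        rw [h]; exact (Zs K V j).neg_mem (ha l) }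

section Aux
variable {K : Type*} [Field K] {V : Type*} [AddCommGroup V]
  [DistribMulAction (Matrix.SpecialLinearGroup (Fin 2) K) V]

lemma mem_Zs_succ {j : ℕ} {v : V} :
    v ∈ Zs K V (j + 1) ↔ ∀ l : K, uu K l • v - v ∈ Zs K V j := Iff.rfl

lemma Zs_le_succ (j : ℕ) : Zs K V j ≤ Zs K V (j + 1) := by
  induction j with
  | zero => exact bot_le
  | succ j ih => intro v hv l; exact ih (hv l)

lemma Zs_mono : Monotone (Zs K V) := monotone_nat_of_le_succ Zs_le_succ

lemma conj_uu {g : Matrix.SpecialLinearGroup (Fin 2) K}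
    (hg : (g : Matrix (Fin 2) (Fin 2) K) 1 0 = 0) (l : K) :
    uu K l * g = g * uu K (l * (g : Matrix (Fin 2) (Fin 2) K) 1 1 *
      (g : Matrix (Fin 2) (Fin 2) K) 1 1) := by
  have hdet : (g : Matrix (Fin 2) (Fin 2) K) 0 0 * (g : Matrix (Fin 2) (Fin 2) K) 1 1 -
      (g : Matrix (Fin 2) (Fin 2) K) 0 1 * (g : Matrix (Fin 2) (Fin 2) K) 1 0 = 1 := by
    rw [← Matrix.det_fin_two]; exact g.2
  apply Subtype.ext
  show (uu K l : Matrix (Fin 2) (Fin 2) K) * g = (g : Matrix (Fin 2) (Fin 2) K) * _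
  have h1 : (g : Matrix (Fin 2) (Fin 2) K) 0 0 * (g : Matrix (Fin 2) (Fin 2) K) 1 1 = 1 := by
    rw [hg] at hdet; linear_combination hdet
  ext i j
  fin_cases i <;> fin_cases j <;>
    simp [uu, Matrix.mul_apply, Fin.sum_univ_two, hg] <;>
    linear_combination (-(l * (g : Matrix (Fin 2) (Fin 2) K) 1 1)) * h1

lemma Zs_B_inv (j : ℕ) (g : Matrix.SpecialLinearGroup (Fin 2) K)
    (hg : (g : Matrix (Fin 2) (Fin 2) K) 1 0 = 0) :
    ∀ v ∈ Zs K V j, g • v ∈ Zs K V j := by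
  induction j with
  | zero =>
    intro v hv
    simp only [Zs, AddSubgroup.mem_bot] at hv ⊢
    rw [hv, smul_zero]
  | succ j ih =>
    intro v hv l
    have key : uu K l • g • v - g • v
        = g • (uu K (l * (g : Matrix (Fin 2) (Fin 2) K) 1 1 *
            (g : Matrix (Fin 2) (Fin 2) K) 1 1) • v - v) := by
      rw [smul_sub, ← mul_smul, ← mul_smul, conj_uu hg]
    rw [key]
    exact ih _ (hv _)

lemma bruhat (g : Matrix.SpecialLinearGroup (Fin 2) K)
    (hc : (g : Matrix (Fin 2) (Fin 2) K) 1 0 ≠ 0) :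
    ∃ b : Matrix.SpecialLinearGroup (Fin 2) K,
      (b : Matrix (Fin 2) (Fin 2) K) 1 0 = 0 ∧
      ∃ l : K, g = b * ww K * uu K l := by
  set a := (g : Matrix (Fin 2) (Fin 2) K) 0 0
  set bb := (g : Matrix (Fin 2) (Fin 2) K) 0 1
  set c := (g : Matrix (Fin 2) (Fin 2) K) 1 0
  set d := (g : Matrix (Fin 2) (Fin 2) K) 1 1
  have hdet : a * d - bb * c = 1 := by
    rw [← Matrix.det_fin_two]; exact g.2
  refine ⟨(⟨!![-(c⁻¹), -a; 0, -c], by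
      simp [Matrix.det_fin_two_of]
      field_simp⟩ : Matrix.SpecialLinearGroup (Fin 2) K), by simp, d / c, ?_⟩
  apply Subtype.ext
  show (g : Matrix (Fin 2) (Fin 2) K) = _
  rw [Matrix.SpecialLinearGroup.coe_mul]
  erw [Matrix.SpecialLinearGroup.coe_mul]
  ext i j
  fin_cases i <;> fin_cases j <;>
    simp [uu, ww, Matrix.mul_apply, Fin.sum_univ_two,
      show (g : Matrix (Fin 2) (Fin 2) K) 0 0 = a from rfl, show (g : Matrix (Fin 2) (Fin 2) K) 0 1 = bb from rfl,
      show (g : Matrix (Fin 2) (Fin 2) K) 1 0 = c from rfl, show (g : Matrix (Fin 2) (Fin 2) K) 1 1 = d from rfl] <;>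
    field_simp <;>
    first | linear_combination hdet | linear_combination -hdet

lemma ww_sq_entry :
    ((ww K * ww K : Matrix.SpecialLinearGroup (Fin 2) K) :
      Matrix (Fin 2) (Fin 2) K) 1 0 = 0 := by
  rw [Matrix.SpecialLinearGroup.coe_mul]
  simp [ww, Matrix.mul_apply, Fin.sum_univ_two]

end Aux

/-- Each `Z_j` is invariant under the Borel subgroup
`B = N_G(U)` of upper triangular matrices; for `n ≥ 2`, the smallest `G`-invariant
subgroup of `V` containing `Z₁ ∩ w·Z_{n-1}` is contained in `Z_{n-1}`; hence if `V`
is `G`-irreducible and `Z_{n-1} ≠ V`, then `Z₁ ∩ w·Z_{n-1} = 0`. -/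
theorem stmt8 {K : Type*} [Field K] {V : Type*} [AddCommGroup V]
    [DistribMulAction (Matrix.SpecialLinearGroup (Fin 2) K) V]
    (n : ℕ) (hn : 2 ≤ n) :
    (∀ (j : ℕ) (g : Matrix.SpecialLinearGroup (Fin 2) K),
      (g : Matrix (Fin 2) (Fin 2) K) 1 0 = 0 →
      ∀ v ∈ Zs K V j, g • v ∈ Zs K V j) ∧
    (AddSubgroup.closure {x : V | ∃ g : Matrix.SpecialLinearGroup (Fin 2) K,
        ∃ v, (v ∈ Zs K V 1 ∧ ∃ z ∈ Zs K V (n - 1), v = ww K • z) ∧ x = g • v}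
      ≤ Zs K V (n - 1)) ∧
    ((∀ W : AddSubgroup V,
        (∀ (g : Matrix.SpecialLinearGroup (Fin 2) K), ∀ v ∈ W, g • v ∈ W) →
        W = ⊥ ∨ W = ⊤) →
      Zs K V (n - 1) ≠ ⊤ →
      ∀ v ∈ Zs K V 1, (∃ z ∈ Zs K V (n - 1), v = ww K • z) → v = 0) := by
  set S : Set V := {x : V | ∃ g : Matrix.SpecialLinearGroup (Fin 2) K,
      ∃ v, (v ∈ Zs K V 1 ∧ ∃ z ∈ Zs K V (n - 1), v = ww K • z) ∧ x = g • v} with hS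
  have hP2 : AddSubgroup.closure S ≤ Zs K V (n - 1) := by
    rw [AddSubgroup.closure_le]
    rintro x ⟨g, v, ⟨hv1, z, hz, rfl⟩, rfl⟩
    have hwz : ww K • (ww K • z) ∈ Zs K V (n - 1) := by
      rw [← mul_smul]
      exact Zs_B_inv _ _ ww_sq_entry z hz
    by_cases hc : (g : Matrix (Fin 2) (Fin 2) K) 1 0 = 0
    · exact Zs_B_inv _ g hc _ (Zs_mono (by omega : 1 ≤ n - 1) hv1)
    · obtain ⟨b, hb, l, rfl⟩ := bruhat g hc
      have hfix : uu K l • (ww K • z) = ww K • z := by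
        have h0 : uu K l • (ww K • z) - ww K • z ∈ (⊥ : AddSubgroup V) := hv1 l
        rw [AddSubgroup.mem_bot, sub_eq_zero] at h0
        exact h0
      rw [mul_smul, mul_smul, hfix]
      exact Zs_B_inv _ b hb _ hwz
  refine ⟨Zs_B_inv, hP2, ?_⟩
  intro hirr hne v hv hz
  have hWinv : ∀ g : Matrix.SpecialLinearGroup (Fin 2) K,
      ∀ x ∈ AddSubgroup.closure S, g • x ∈ AddSubgroup.closure S := by
    intro g x hx
    have hle : AddSubgroup.closure S ≤
        (AddSubgroup.closure S).comap (DistribMulAction.toAddMonoidHom V g) := by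
      rw [AddSubgroup.closure_le]
      rintro y ⟨g', v', hv', rfl⟩
      rw [SetLike.mem_coe, AddSubgroup.mem_comap]
      exact AddSubgroup.subset_closure ⟨g * g', v', hv', (mul_smul g g' v').symm⟩
    exact hle hx
  rcases hirr _ hWinv with hbot | htop
  · have hmem : v ∈ AddSubgroup.closure S :=
      AddSubgroup.subset_closure ⟨1, v, ⟨hv, hz⟩, (one_smul _ v).symm⟩
    rw [hbot] at hmem
    simpa using hmem
  · exact absurd (top_le_iff.mp (htop ▸ hP2)) hne
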